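/- Let A > 0 and V : 2ℤ → ℂ satisfy 1/A ≤ |V(k)| ≤ A for all k. Define, for n ≥ 3 and |z| < n/2, S_k^±(n,z) = Σ_{j₁,…,j_k ≠ ±n, jᵢ ≡ n mod 2} V(±n−j₁)V(j₁−j₂)⋯V(j_{k-1}−j_k)V(j_k ∓(−1)·n) / ((n²−j₁²+z)⋯(n²−j_k²+z)). Then |S_k^±(n,z)| ≤ (4A)^{k+1} ((log n)/n)^k, and consequently Σ_{k≥1} |S_k^±(n,z)| = O((log n)/n) as n → ∞. -/

import Mathlib

open Function

lemma tsum_pi_prod (f : ℤ → ENNReal) : ∀ m : ℕ, (∑' j : Fin m → ℤ, ∏ i, f (j i)) = (∑' x, f x) ^ m := by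
  intro m
  induction m with
  | zero =>
    rw [pow_zero, tsum_eq_single (fun i => i.elim0)]
    · simp
    · intro b hb; exact absurd (funext fun i => i.elim0) hb
  | succ m ih =>
    rw [← (Fin.consEquiv (fun _ : Fin (m+1) => ℤ)).tsum_eq]
    rw [ENNReal.tsum_prod']
    have h1 : ∀ a : ℤ, (∑' b : Fin m → ℤ,
        ∏ x : Fin (m+1), f ((Fin.consEquiv (fun _ : Fin (m+1) => ℤ)) (a, b) x))
        = f a * ∑' b : Fin m → ℤ, ∏ i, f (b i) := by
      intro a
      rw [← ENNReal.tsum_mul_left]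
      refine tsum_congr fun b => ?_
      have : ∀ x, f ((Fin.consEquiv (fun _ : Fin (m+1) => ℤ)) (a, b) x)
          = Fin.cons (α := fun _ : Fin (m+1) => ENNReal) (f a) (f ∘ b) x := by
        intro x
        show f (Fin.cons (α := fun _ : Fin (m+1) => ℤ) a b x) = _
        rw [show f (Fin.cons (α := fun _ : Fin (m+1) => ℤ) a b x)
            = (f ∘ Fin.cons (α := fun _ : Fin (m+1) => ℤ) a b) x from rfl, Fin.comp_cons]
      simp_rw [this]
      rw [Fin.prod_cons]
      rfl
    rw [tsum_congr h1, ENNReal.tsum_mul_right, ih, pow_succ, mul_comm]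


lemma sum_partial (n M : ℕ) (hn : 1 ≤ n) :
    ∑ m ∈ Finset.range M, (1:ℝ) / ((m+1) * (m+1+n)) ≤ (harmonic n : ℝ) / n := by
  have hterm : ∀ m : ℕ, (1:ℝ)/((m+1) * (m+1+n)) = (1/n) * (1/(m+1) - 1/(m+1+n)) := by
    intro m
    have h1 : (0:ℝ) < m+1 := by positivity
    have h2 : (0:ℝ) < (m:ℝ)+1+n := by positivity
    have h3 : (0:ℝ) < n := by exact_mod_cast hn
    field_simp
    ring
  simp_rw [hterm, ← Finset.mul_sum]
  rw [Finset.sum_sub_distrib]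
  have hhar : (harmonic n : ℝ) = ∑ i ∈ Finset.range n, (1:ℝ)/(i+1) := by
    simp [harmonic, one_div]
  have key : ∑ m ∈ Finset.range M, (1:ℝ)/(m+1)
      ≤ (harmonic n : ℝ) + ∑ m ∈ Finset.range M, (1:ℝ)/(m+1+n) := by
    have h1 : ∑ m ∈ Finset.range M, (1:ℝ)/(m+1) ≤ ∑ m ∈ Finset.range (n+M), (1:ℝ)/(m+1) := by
      apply Finset.sum_le_sum_of_subset_of_nonneg
      · exact Finset.range_subset_range.2 (by omega)
      · intro i _ _; positivity
    have h2 : ∑ m ∈ Finset.range (n+M), (1:ℝ)/(m+1)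
        = ∑ m ∈ Finset.range n, (1:ℝ)/(m+1) + ∑ m ∈ Finset.range M, (1:ℝ)/(n+m+1) := by
      rw [Finset.sum_range_add (fun m => (1:ℝ)/(m+1)) n M]
      congr 1
      refine Finset.sum_congr rfl fun m _ => by push_cast; ring_nf
    rw [hhar]
    refine h1.trans (le_of_eq ?_)
    rw [h2]
    congr 1
    refine Finset.sum_congr rfl fun m _ => ?_
    push_cast
    ring_nf
  have hn' : (0:ℝ) < n := by exact_mod_cast hn
  rw [div_eq_mul_one_div ((harmonic n : ℝ)) (n:ℝ), mul_comm ((harmonic n:ℝ)) (1/(n:ℝ))]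
  apply mul_le_mul_of_nonneg_left _ (by positivity)
  linarith


lemma tsum_shift (n : ℕ) (hn : 1 ≤ n) :
    ∑' m : ℕ, ENNReal.ofReal ((1:ℝ) / ((m+1) * (m+1+n))) ≤ ENNReal.ofReal ((harmonic n:ℝ) / n) := by
  rw [ENNReal.tsum_eq_iSup_sum]
  refine iSup_le fun s => ?_
  obtain ⟨M, hM⟩ := s.exists_nat_subset_range
  calc ∑ m ∈ s, ENNReal.ofReal ((1:ℝ) / ((m+1) * (m+1+n)))
      ≤ ∑ m ∈ Finset.range M, ENNReal.ofReal ((1:ℝ) / ((m+1) * (m+1+n))) :=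
        Finset.sum_le_sum_of_subset hM
    _ = ENNReal.ofReal (∑ m ∈ Finset.range M, (1:ℝ) / ((m+1) * (m+1+n))) :=
        (ENNReal.ofReal_sum_of_nonneg fun i _ => by positivity).symm
    _ ≤ _ := ENNReal.ofReal_le_ofReal (sum_partial n M hn)

lemma sum_mid (n : ℕ) (hn : 3 ≤ n) :
    ∑ m ∈ Finset.range n, (if (m:ℕ)+1 = n then (0:ℝ) else 1/(4*(m+1)*|(n:ℝ)-(m+1)|))
      ≤ (1/2) * ((harmonic n : ℝ) / n) := by
  have hn' : (0:ℝ) < n := by positivity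
  have hterm : ∀ m ∈ Finset.range n, (if (m:ℕ)+1 = n then (0:ℝ) else 1/(4*(m+1)*|(n:ℝ)-(m+1)|))
      ≤ (1/(4*n)) * ((if (m:ℕ)+1 = n then (0:ℝ) else 1/(m+1)) +
        (if (m:ℕ)+1 = n then (0:ℝ) else 1/((n:ℝ)-(m+1)))) := by
    intro m hm
    rcases eq_or_ne (m+1) n with h | h
    · simp [h]
    · simp only [if_neg h]
      have hmn : m + 1 < n := by
        have := Finset.mem_range.1 hm; omega
      have hpos : (0:ℝ) < (n:ℝ) - (m+1) := by
        have : ((m:ℕ)+1 : ℝ) < n := by exact_mod_cast hmn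
        linarith
      rw [abs_of_pos hpos]
      have h1 : (0:ℝ) < m+1 := by positivity
      have heq : (1:ℝ)/(4*(m+1)*((n:ℝ)-(m+1)))
          = (1/(4*n)) * (1/(m+1) + 1/((n:ℝ)-(m+1))) := by
        field_simp
        ring
      exact le_of_eq heq
  calc ∑ m ∈ Finset.range n, (if (m:ℕ)+1 = n then (0:ℝ) else 1/(4*(m+1)*|(n:ℝ)-(m+1)|))
      ≤ ∑ m ∈ Finset.range n, (1/(4*n)) * ((if (m:ℕ)+1 = n then (0:ℝ) else 1/(m+1)) +
        (if (m:ℕ)+1 = n then (0:ℝ) else 1/((n:ℝ)-(m+1)))) := Finset.sum_le_sum hterm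
    _ = (1/(4*(n:ℝ))) * ((∑ m ∈ Finset.range n, (if (m:ℕ)+1 = n then (0:ℝ) else 1/(m+1)))
        + ∑ m ∈ Finset.range n, (if (m:ℕ)+1 = n then (0:ℝ) else 1/((n:ℝ)-(m+1)))) := by
        rw [← Finset.mul_sum, Finset.sum_add_distrib]
    _ ≤ (1/(4*(n:ℝ))) * ((harmonic n : ℝ) + (harmonic n : ℝ)) := by
        have hhar : (harmonic n : ℝ) = ∑ i ∈ Finset.range n, (1:ℝ)/(i+1) := by
          simp [harmonic, one_div]
        refine mul_le_mul_of_nonneg_left ?_ (by positivity)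
        have hb1 : (∑ m ∈ Finset.range n, (if (m:ℕ)+1 = n then (0:ℝ) else 1/(m+1)))
            ≤ (harmonic n : ℝ) := by
          rw [hhar]
          refine Finset.sum_le_sum fun m _ => ?_
          rcases eq_or_ne (m+1) n with h | h
          · simp [h]; positivity
          · simp [h]
        have hb2 : (∑ m ∈ Finset.range n, (if (m:ℕ)+1 = n then (0:ℝ) else 1/((n:ℝ)-(m+1))))
            ≤ (harmonic n : ℝ) := by
          rw [← Finset.sum_range_reflect]
          have heq : ∀ m ∈ Finset.range n,
              (if (n - 1 - m)+1 = n then (0:ℝ) else 1/((n:ℝ)-((n-1-m : ℕ)+1)))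
              = (if m = 0 then (0:ℝ) else 1/(m:ℝ)) := by
            intro m hm
            have hmn : m < n := Finset.mem_range.1 hm
            rcases eq_or_ne m 0 with h | h
            · subst h
              rw [if_pos (by omega : (n-1-0)+1 = n), if_pos rfl]
            · have hne : (n-1-m)+1 ≠ n := by omega
              rw [if_neg hne, if_neg h]
              have hc : ((n-1-m : ℕ) : ℝ) = (n:ℝ) - 1 - m := by
                rw [show n-1-m = n-(1+m) by omega, Nat.cast_sub (by omega : 1 + m ≤ n)]
                push_cast
                ring
              rw [hc]
              congr 1
              ring
          rw [Finset.sum_congr rfl heq]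
          have : n = (n-1)+1 := by omega
          rw [this, Finset.sum_range_succ']
          have e0 : (if (0:ℕ) = 0 then (0:ℝ) else 1/((0:ℕ):ℝ)) = 0 := by simp
          have e1 : ∀ x : ℕ, (if (x+1:ℕ) = 0 then (0:ℝ) else 1/((x+1:ℕ):ℝ)) = 1/((x:ℝ)+1) := by
            intro x; rw [if_neg (Nat.succ_ne_zero x)]; push_cast; ring
          rw [e0, add_zero, Finset.sum_congr rfl (fun x _ => e1 x)]
          have hh2 : (harmonic (n-1) : ℝ) = ∑ i ∈ Finset.range (n-1), (1:ℝ)/(i+1) := by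
            simp [harmonic, one_div]
          rw [← hh2, ← this]
          have hmono : harmonic (n-1) ≤ harmonic n := by
            calc harmonic (n-1) ≤ harmonic (n-1) + (↑((n-1)+1) : ℚ)⁻¹ := by
                  have : (0:ℚ) ≤ (↑((n-1)+1))⁻¹ := by positivity
                  linarith
              _ = harmonic ((n-1)+1) := (harmonic_succ _).symm
              _ = harmonic n := by rw [show (n-1)+1 = n by omega]
          exact_mod_cast hmono
        linarith
    _ = (1/2) * ((harmonic n : ℝ) / n) := by field_simp; ring


noncomputable def hq (n : ℕ) (t : ℤ) : ENNReal :=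
  if t = 0 ∨ t = -(n:ℤ) then 0 else ENNReal.ofReal (1 / (4 * |(t:ℝ)| * |(n:ℝ)+(t:ℝ)|))

lemma hq_pos_val (n : ℕ) (hn : 3 ≤ n) (m : ℕ) :
    hq n ((m+1 : ℕ):ℤ) = ENNReal.ofReal ((1/4) * ((1:ℝ)/(((m:ℝ)+1)*((m:ℝ)+1+n)))) := by
  rw [hq, if_neg (by push_cast; omega)]
  congr 1
  have h1 : |(((m+1:ℕ):ℤ):ℝ)| = (m:ℝ)+1 := by
    push_cast; rw [abs_of_pos (by positivity)]
  have h2 : |(n:ℝ)+(((m+1:ℕ):ℤ):ℝ)| = (n:ℝ)+(m:ℝ)+1 := by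
    push_cast; rw [abs_of_pos (by positivity)]; ring
  rw [h1, h2]
  have hd1 : (0:ℝ) < (m:ℝ)+1 := by positivity
  have hd2 : (0:ℝ) < (m:ℝ)+1+n := by positivity
  field_simp
  ring

lemma tsum_hq_pos (n : ℕ) (hn : 3 ≤ n) :
    (∑' m : ℕ, hq n ((m:ℕ):ℤ)) ≤ ENNReal.ofReal ((1/4) * ((harmonic n:ℝ)/n)) := by
  have h0 : support (fun m : ℕ => hq n ((m:ℕ):ℤ)) ⊆ Set.range (fun m : ℕ => m+1) := by
    intro m hm
    rcases Nat.eq_zero_or_pos m with h | h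
    · exfalso; apply hm; simp [h, hq]
    · exact ⟨m-1, by simp; omega⟩
  have hinj : Injective (fun m : ℕ => m + 1) := add_left_injective 1
  rw [← hinj.tsum_eq h0]
  have hval : ∀ m : ℕ, hq n (((m+1:ℕ)):ℤ)
      = ENNReal.ofReal (1/4) * ENNReal.ofReal ((1:ℝ)/(((m:ℝ)+1)*((m:ℝ)+1+n))) := by
    intro m
    rw [hq_pos_val n hn m, ENNReal.ofReal_mul (by norm_num)]
  calc (∑' m : ℕ, hq n (((m+1:ℕ)):ℤ))
      = ENNReal.ofReal (1/4) * ∑' m : ℕ, ENNReal.ofReal ((1:ℝ)/(((m:ℝ)+1)*((m:ℝ)+1+n))) := by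
        rw [← ENNReal.tsum_mul_left]; exact tsum_congr hval
    _ ≤ ENNReal.ofReal (1/4) * ENNReal.ofReal ((harmonic n:ℝ)/n) := by
        gcongr
        have := tsum_shift n (by omega)
        refine le_trans (le_of_eq (tsum_congr fun m => ?_)) this
        norm_num
    _ = ENNReal.ofReal ((1/4) * ((harmonic n:ℝ)/n)) := by
        rw [← ENNReal.ofReal_mul (by norm_num)]

lemma tsum_hq_neg (n : ℕ) (hn : 3 ≤ n) :
    (∑' m : ℕ, hq n (-((m:ℤ)+1))) ≤ ENNReal.ofReal ((3/4) * ((harmonic n:ℝ)/n)) := by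
  set G : ℕ → ENNReal := fun m => hq n (-((m:ℤ)+1)) with hG
  have hsplit : ∀ m, G m = (if m < n then G m else 0) + (if m < n then 0 else G m) := by
    intro m; by_cases h : m < n <;> simp [h]
  rw [tsum_congr hsplit, ENNReal.tsum_add]
  have hmid : (∑' m : ℕ, if m < n then G m else 0)
      ≤ ENNReal.ofReal ((1/2) * ((harmonic n:ℝ)/n)) := by
    rw [tsum_eq_sum (s := Finset.range n) (by intro b hb; rw [if_neg (by simpa using hb)])]
    have hval : ∀ m ∈ Finset.range n, (if m < n then G m else 0)
        = ENNReal.ofReal (if (m:ℕ)+1 = n then (0:ℝ) else 1/(4*(m+1)*|(n:ℝ)-(m+1)|)) := by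
      intro m hm
      rw [if_pos (Finset.mem_range.1 hm), hG]
      simp only
      by_cases h : m+1 = n
      · rw [hq, if_pos (Or.inr (by push_cast; omega)), if_pos h, ENNReal.ofReal_zero]
      · rw [hq, if_neg (by push_cast; omega), if_neg h]
        congr 1
        push_cast
        have h1 : |(-((m:ℝ)+1))| = (m:ℝ)+1 := by
          rw [abs_neg, abs_of_pos (by positivity)]
        have h2 : ((n:ℝ)+(-((m:ℝ)+1))) = (n:ℝ)-((m:ℝ)+1) := by ring
        rw [h1, h2]
    rw [Finset.sum_congr rfl hval,
      ← ENNReal.ofReal_sum_of_nonneg (fun i _ => by positivity)]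
    exact ENNReal.ofReal_le_ofReal (sum_mid n hn)
  have htail : (∑' m : ℕ, if m < n then 0 else G m)
      ≤ ENNReal.ofReal ((1/4) * ((harmonic n:ℝ)/n)) := by
    have h0 : support (fun m : ℕ => if m < n then 0 else G m)
        ⊆ Set.range (fun m : ℕ => m + n) := by
      intro m hm
      by_cases h : m < n
      · exact absurd (by simp [h]) hm
      · exact ⟨m - n, by simp; omega⟩
    have hinj : Injective (fun m : ℕ => m + n) := add_left_injective n
    rw [← hinj.tsum_eq h0]
    have hval : ∀ m : ℕ, (if m + n < n then 0 else G (m + n))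
        = ENNReal.ofReal (1/4) * ENNReal.ofReal ((1:ℝ)/(((m:ℝ)+1)*((m:ℝ)+1+n))) := by
      intro m
      rw [if_neg (by omega), hG]
      simp only
      rw [hq, if_neg (by rintro (hc | hc) <;> omega), ← ENNReal.ofReal_mul (by norm_num)]
      congr 1
      push_cast
      have h1 : |(-(((m:ℝ)+(n:ℝ))+1))| = (m:ℝ)+(n:ℝ)+1 := by
        rw [abs_neg, abs_of_pos (by positivity)]
      have h2 : |(n:ℝ)+(-(((m:ℝ)+(n:ℝ))+1))| = (m:ℝ)+1 := by
        rw [show (n:ℝ)+(-(((m:ℝ)+(n:ℝ))+1)) = -((m:ℝ)+1) by ring,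
          abs_neg, abs_of_pos (by positivity)]
      rw [h1, h2]
      have hd1 : (0:ℝ) < (m:ℝ)+1 := by positivity
      have hd2 : (0:ℝ) < (m:ℝ)+1+n := by positivity
      have hd3 : (0:ℝ) < (m:ℝ)+(n:ℝ)+1 := by positivity
      field_simp
      ring
    calc (∑' m : ℕ, if m + n < n then 0 else G (m + n))
        = ENNReal.ofReal (1/4) * ∑' m : ℕ, ENNReal.ofReal ((1:ℝ)/(((m:ℝ)+1)*((m:ℝ)+1+n))) := by
          rw [← ENNReal.tsum_mul_left]; exact tsum_congr hval
      _ ≤ ENNReal.ofReal (1/4) * ENNReal.ofReal ((harmonic n:ℝ)/n) := by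
          gcongr
          have := tsum_shift n (by omega)
          refine le_trans (le_of_eq (tsum_congr fun m => ?_)) this
          norm_num
      _ = ENNReal.ofReal ((1/4) * ((harmonic n:ℝ)/n)) := by
          rw [← ENNReal.ofReal_mul (by norm_num)]
  calc (∑' m : ℕ, if m < n then G m else 0) + (∑' m : ℕ, if m < n then 0 else G m)
      ≤ ENNReal.ofReal ((1/2) * ((harmonic n:ℝ)/n))
        + ENNReal.ofReal ((1/4) * ((harmonic n:ℝ)/n)) := add_le_add hmid htail
    _ = ENNReal.ofReal ((3/4) * ((harmonic n:ℝ)/n)) := by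
        have hh : (0:ℝ) ≤ (harmonic n : ℝ) :=
          le_of_lt (by exact_mod_cast harmonic_pos (by omega : n ≠ 0))
        have h1 : (0:ℝ) ≤ (1/2) * ((harmonic n:ℝ)/n) :=
          mul_nonneg (by norm_num) (div_nonneg hh (Nat.cast_nonneg n))
        have h2 : (0:ℝ) ≤ (1/4) * ((harmonic n:ℝ)/n) :=
          mul_nonneg (by norm_num) (div_nonneg hh (Nat.cast_nonneg n))
        rw [← ENNReal.ofReal_add h1 h2]
        congr 1
        ring




lemma one_le_log (n : ℕ) (hn : 3 ≤ n) : 1 ≤ Real.log n := by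
  rw [Real.le_log_iff_exp_le (by positivity : (0:ℝ) < n)]
  have h1 : Real.exp 1 < 2.7182818286 := Real.exp_one_lt_d9
  have h3 : (3:ℝ) ≤ n := by exact_mod_cast hn
  linarith

lemma tsum_hre (n : ℕ) (hn : 3 ≤ n) :
    (∑' j : ℤ, ENNReal.ofReal (if (j - (n:ℤ)) % 2 = 0 ∧ j ≠ (n:ℤ) ∧ j ≠ -(n:ℤ) then
      1 / |(n:ℝ)^2 - (j:ℝ)^2| else 0)) ≤ ENNReal.ofReal (2 * Real.log n / n) := by
  set F : ℤ → ENNReal := fun j => ENNReal.ofReal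
    (if (j - (n:ℤ)) % 2 = 0 ∧ j ≠ (n:ℤ) ∧ j ≠ -(n:ℤ) then 1 / |(n:ℝ)^2 - (j:ℝ)^2| else 0)
    with hF
  have he : Injective (fun t : ℤ => (n:ℤ) + 2*t) := fun a b h => by
    simp only at h; omega
  have hsupp : support F ⊆ Set.range (fun t : ℤ => (n:ℤ) + 2*t) := by
    intro j hj
    rcases Classical.em ((j - (n:ℤ)) % 2 = 0 ∧ j ≠ (n:ℤ) ∧ j ≠ -(n:ℤ)) with hc | hc
    · exact ⟨(j - n)/2, by simp; omega⟩
    · exfalso; apply hj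
      simp only [hF]
      rw [if_neg hc]
      exact ENNReal.ofReal_zero
  rw [← he.tsum_eq hsupp]
  have hb : ∀ t : ℤ, F ((fun t : ℤ => (n:ℤ) + 2*t) t) ≤ hq n t := by
    intro t
    rcases Classical.em (t = 0 ∨ t = -(n:ℤ)) with h | h
    · have hcond : ¬(((n:ℤ) + 2*t - n) % 2 = 0 ∧ (n:ℤ)+2*t ≠ (n:ℤ) ∧ (n:ℤ)+2*t ≠ -(n:ℤ)) := by
        rcases h with h | h <;> (subst h; intro hx; omega)
      have hz : F ((fun t : ℤ => (n:ℤ) + 2*t) t) = 0 := by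
        simp only [hF]
        rw [if_neg hcond]
        exact ENNReal.ofReal_zero
      rw [hz]
      exact zero_le
    · push_neg at h
      have hcond : (((n:ℤ) + 2*t - n) % 2 = 0 ∧ (n:ℤ)+2*t ≠ (n:ℤ) ∧ (n:ℤ)+2*t ≠ -(n:ℤ)) :=
        ⟨by omega, by omega, by omega⟩
      have habs : |(n:ℝ)^2 - ((((n:ℤ) + 2*t : ℤ)):ℝ)^2| = 4 * |(t:ℝ)| * |(n:ℝ)+(t:ℝ)| := by
        push_cast
        rw [show (n:ℝ)^2 - ((n:ℝ) + 2*(t:ℝ))^2 = -(4 * ((t:ℝ) * ((n:ℝ)+(t:ℝ)))) by ring,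
          abs_neg, abs_mul, abs_mul]
        rw [abs_of_pos (by norm_num : (0:ℝ) < 4)]
        ring
      have hv : F ((fun t : ℤ => (n:ℤ) + 2*t) t)
          = ENNReal.ofReal (1 / (4 * |(t:ℝ)| * |(n:ℝ)+(t:ℝ)|)) := by
        simp only [hF]
        rw [if_pos hcond, habs]
      rw [hv, hq, if_neg (not_or.2 h)]
  refine le_trans (ENNReal.tsum_le_tsum hb) ?_
  rw [tsum_of_nat_of_neg_add_one ENNReal.summable ENNReal.summable]
  have hh : (0:ℝ) ≤ (harmonic n : ℝ) :=
    le_of_lt (by exact_mod_cast harmonic_pos (by omega : n ≠ 0))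
  calc (∑' m : ℕ, hq n ((m:ℕ):ℤ)) + (∑' m : ℕ, hq n (-((m:ℤ)+1)))
      ≤ ENNReal.ofReal ((1/4) * ((harmonic n:ℝ)/n))
        + ENNReal.ofReal ((3/4) * ((harmonic n:ℝ)/n)) :=
        add_le_add (tsum_hq_pos n hn) (tsum_hq_neg n hn)
    _ = ENNReal.ofReal ((harmonic n:ℝ)/n) := by
        rw [← ENNReal.ofReal_add
          (mul_nonneg (by norm_num) (div_nonneg hh (Nat.cast_nonneg n)))
          (mul_nonneg (by norm_num) (div_nonneg hh (Nat.cast_nonneg n)))]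
        congr 1
        ring
    _ ≤ ENNReal.ofReal (2 * Real.log n / n) := by
        apply ENNReal.ofReal_le_ofReal
        have hlog := one_le_log n hn
        have hhar : (harmonic n : ℝ) ≤ 1 + Real.log n := harmonic_le_one_add_log n
        have h2 : (harmonic n : ℝ) ≤ 2 * Real.log n := by linarith
        have hn0 : (0:ℝ) < (n:ℝ) := by exact_mod_cast (by omega : 0 < n)
        exact (div_le_div_iff_of_pos_right hn0).2 h2

/-- The `k+1`-fold term `S_{k+1}^±(n,z)` in the expansion of `β_n^±(v;z)`:
for `s = 1` it is `S^+`, for `s = -1` it is `S^-`. -/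
noncomputable def hillS (V : ℤ → ℂ) (n : ℕ) (z : ℂ) (s : ℤ) (k : ℕ) : ℂ :=
  ∑' j : Fin (k + 1) → ℤ,
    if (∀ i, (j i - (n : ℤ)) % 2 = 0 ∧ j i ≠ (n : ℤ) ∧ j i ≠ -(n : ℤ)) then
      (V (s * n - j 0) * (∏ i : Fin k, V (j i.castSucc - j i.succ)) *
          V (j (Fin.last k) + s * n)) /
        ∏ i : Fin (k + 1), ((n : ℂ) ^ 2 - (j i : ℂ) ^ 2 + z)
    else 0

lemma part1 (A : ℝ) (hA : 0 < A) (V : ℤ → ℂ)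
    (hV : ∀ k : ℤ, k % 2 = 0 → ‖V k‖ ≤ A)
    (n : ℕ) (hn : 3 ≤ n) (z : ℂ) (hz : ‖z‖ < (n : ℝ) / 2) (s : ℤ)
    (hs : s = 1 ∨ s = -1) (k : ℕ) :
    ‖hillS V n z s k‖ ≤ (4 * A) ^ (k + 2) * (Real.log n / n) ^ (k + 1) := by
  classical
  have hlog1 : 1 ≤ Real.log n := one_le_log n hn
  have hnR : (0:ℝ) < n := by positivity
  have hrn : (0:ℝ) ≤ 4 * Real.log n / n := by
    apply div_nonneg _ hnR.le; linarith
  have hBnn : (0:ℝ) ≤ A^(k+2) * (4*Real.log n/n)^(k+1) := by positivity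
  set f : (Fin (k+1) → ℤ) → ℂ := fun j =>
    if (∀ i, (j i - (n : ℤ)) % 2 = 0 ∧ j i ≠ (n : ℤ) ∧ j i ≠ -(n : ℤ)) then
      (V (s * n - j 0) * (∏ i : Fin k, V (j i.castSucc - j i.succ)) *
          V (j (Fin.last k) + s * n)) /
        ∏ i : Fin (k + 1), ((n : ℂ) ^ 2 - (j i : ℂ) ^ 2 + z)
    else 0 with hf
  have hillS_eq : hillS V n z s k = ∑' j, f j := rfl
  set w : ℤ → ℝ := fun x =>
    if (x - (n:ℤ)) % 2 = 0 ∧ x ≠ (n:ℤ) ∧ x ≠ -(n:ℤ) then 2 / |(n:ℝ)^2 - (x:ℝ)^2| else 0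
    with hw
  have hw_nonneg : ∀ x, 0 ≤ w x := by
    intro x; rw [hw]; dsimp only; split <;> positivity
  set g : (Fin (k+1) → ℤ) → ℝ := fun j => A^(k+2) * ∏ i, w (j i) with hg
  have hg_nonneg : ∀ j, 0 ≤ g j := by
    intro j; rw [hg]; dsimp only
    exact mul_nonneg (by positivity) (Finset.prod_nonneg fun i _ => hw_nonneg _)
  -- integer distance bound
  have hDint : ∀ x : ℤ, (x - (n:ℤ)) % 2 = 0 → x ≠ (n:ℤ) → x ≠ -(n:ℤ) →
      (n:ℤ) ≤ |(n:ℤ)^2 - x^2| := by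
    intro x hp h1 h2
    have hn3 : (3:ℤ) ≤ (n:ℤ) := by exact_mod_cast hn
    rcases (by omega : (-(n:ℤ)+2 ≤ x ∧ x ≤ (n:ℤ)-2) ∨ (n:ℤ)+2 ≤ x ∨ x ≤ -(n:ℤ)-2) with
      ⟨ha, hb⟩ | h | h
    · rw [abs_of_nonneg (by nlinarith)]; nlinarith
    · rw [abs_of_nonpos (by nlinarith)]; nlinarith
    · rw [abs_of_nonpos (by nlinarith)]; nlinarith
  have hDreal : ∀ x : ℤ, (x - (n:ℤ)) % 2 = 0 → x ≠ (n:ℤ) → x ≠ -(n:ℤ) →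
      (n:ℝ) ≤ |(n:ℝ)^2 - (x:ℝ)^2| := by
    intro x hp h1 h2
    have h := hDint x hp h1 h2
    have h' : ((n:ℤ):ℝ) ≤ ((|(n:ℤ)^2 - x^2| : ℤ) : ℝ) := by exact_mod_cast h
    rwa [Int.cast_abs, show (((n:ℤ)^2 - x^2 : ℤ) : ℝ) = (n:ℝ)^2 - (x:ℝ)^2 by push_cast; ring,
      Int.cast_natCast] at h'
  have htri : ∀ a b : ℂ, ‖a‖ - ‖b‖ ≤ ‖a + b‖ := by
    intro a b
    have h := norm_sub_norm_le a (-b)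
    simpa [sub_neg_eq_add] using h
  have hden : ∀ x : ℤ, (x - (n:ℤ)) % 2 = 0 → x ≠ (n:ℤ) → x ≠ -(n:ℤ) →
      |(n:ℝ)^2 - (x:ℝ)^2| / 2 ≤ ‖(n:ℂ)^2 - (x:ℂ)^2 + z‖ := by
    intro x hp h1 h2
    have hD := hDreal x hp h1 h2
    have hcast : ((n:ℂ)^2 - (x:ℂ)^2 + z) = ((((n:ℝ)^2 - (x:ℝ)^2 : ℝ)):ℂ) + z := by
      push_cast; ring
    rw [hcast]
    have h3 := htri ((((n:ℝ)^2 - (x:ℝ)^2 : ℝ)):ℂ) z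
    rw [Complex.norm_real] at h3
    have : |(n:ℝ)^2 - (x:ℝ)^2| = ‖(n:ℝ)^2 - (x:ℝ)^2‖ := rfl
    linarith [abs_abs ((n:ℝ)^2 - (x:ℝ)^2)]
  -- pointwise bound
  have hle : ∀ j, ‖f j‖ ≤ g j := by
    intro j
    rw [hf, hg]; dsimp only
    by_cases hc : (∀ i, (j i - (n : ℤ)) % 2 = 0 ∧ j i ≠ (n : ℤ) ∧ j i ≠ -(n : ℤ))
    · rw [if_pos hc]
      have hw_eq : ∀ i : Fin (k+1), w (j i) = 2 / |(n:ℝ)^2 - ((j i):ℝ)^2| := by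
        intro i; rw [hw]; dsimp only; rw [if_pos (hc i)]
      -- numerator
      have h0 : ‖V (s * n - j 0)‖ ≤ A := by
        apply hV; rcases hs with h | h <;> (subst h; have := (hc 0).1; omega)
      have hlast : ‖V (j (Fin.last k) + s * n)‖ ≤ A := by
        apply hV; rcases hs with h | h <;> (subst h; have := (hc (Fin.last k)).1; omega)
      have hmid : ‖∏ i : Fin k, V (j i.castSucc - j i.succ)‖ ≤ A^k := by
        rw [norm_prod]
        calc ∏ i : Fin k, ‖V (j i.castSucc - j i.succ)‖
            ≤ ∏ _i : Fin k, A := by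
              apply Finset.prod_le_prod (fun i _ => norm_nonneg _)
              intro i _
              apply hV
              have h1 := (hc i.castSucc).1
              have h2 := (hc i.succ).1
              omega
          _ = A^k := by rw [Finset.prod_const, Finset.card_univ, Fintype.card_fin]
      have hnum : ‖V (s * n - j 0) * (∏ i : Fin k, V (j i.castSucc - j i.succ)) *
          V (j (Fin.last k) + s * n)‖ ≤ A^(k+2) := by
        rw [norm_mul, norm_mul]
        calc ‖V (s * n - j 0)‖ * ‖∏ i : Fin k, V (j i.castSucc - j i.succ)‖
              * ‖V (j (Fin.last k) + s * n)‖
            ≤ (A * A^k) * A := by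
              apply mul_le_mul _ hlast (norm_nonneg _) (by positivity)
              exact mul_le_mul h0 hmid (norm_nonneg _) hA.le
          _ = A^(k+2) := by ring
      -- denominator
      have hLpos : (0:ℝ) < ∏ i : Fin (k+1), (|(n:ℝ)^2 - ((j i):ℝ)^2| / 2) := by
        apply Finset.prod_pos
        intro i _
        have := hDreal (j i) (hc i).1 (hc i).2.1 (hc i).2.2
        linarith
      have hLle : (∏ i : Fin (k+1), (|(n:ℝ)^2 - ((j i):ℝ)^2| / 2))
          ≤ ‖∏ i : Fin (k+1), ((n:ℂ)^2 - ((j i):ℂ)^2 + z)‖ := by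
        rw [norm_prod]
        apply Finset.prod_le_prod
        · intro i _
          have := hDreal (j i) (hc i).1 (hc i).2.1 (hc i).2.2
          linarith
        · intro i _
          exact hden (j i) (hc i).1 (hc i).2.1 (hc i).2.2
      rw [norm_div]
      calc ‖V (s * n - j 0) * (∏ i : Fin k, V (j i.castSucc - j i.succ)) *
            V (j (Fin.last k) + s * n)‖
            / ‖∏ i : Fin (k+1), ((n:ℂ)^2 - ((j i):ℂ)^2 + z)‖
          ≤ A^(k+2) / (∏ i : Fin (k+1), (|(n:ℝ)^2 - ((j i):ℝ)^2| / 2)) :=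
            div_le_div₀ (by positivity) hnum hLpos hLle
        _ = A^(k+2) * ∏ i : Fin (k+1), w (j i) := by
            rw [div_eq_mul_inv, ← Finset.prod_inv_distrib]
            congr 1
            refine Finset.prod_congr rfl fun i _ => ?_
            rw [hw_eq i, inv_div]
    · rw [if_neg hc]
      push_neg at hc
      obtain ⟨i, hi⟩ := hc
      have : w (j i) = 0 := by
        rw [hw]; dsimp only
        rw [if_neg]
        intro hx
        exact hx.2.2 (hi hx.1 hx.2.1)
      rw [norm_zero, Finset.prod_eq_zero (Finset.mem_univ i) this, mul_zero]
  -- ENNReal computations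
  have hwsum : (∑' x : ℤ, ENNReal.ofReal (w x)) ≤ ENNReal.ofReal (4 * Real.log n / n) := by
    have hsplit : ∀ x : ℤ, ENNReal.ofReal (w x) = ENNReal.ofReal 2 * ENNReal.ofReal
        (if (x - (n:ℤ)) % 2 = 0 ∧ x ≠ (n:ℤ) ∧ x ≠ -(n:ℤ) then 1/|(n:ℝ)^2 - (x:ℝ)^2| else 0) := by
      intro x
      rw [← ENNReal.ofReal_mul (by norm_num), hw]
      dsimp only
      congr 1
      split
      · rw [mul_one_div]
      · rw [mul_zero]
    rw [tsum_congr hsplit, ENNReal.tsum_mul_left]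
    calc ENNReal.ofReal 2 * (∑' x : ℤ, ENNReal.ofReal
          (if (x - (n:ℤ)) % 2 = 0 ∧ x ≠ (n:ℤ) ∧ x ≠ -(n:ℤ) then 1/|(n:ℝ)^2 - (x:ℝ)^2| else 0))
        ≤ ENNReal.ofReal 2 * ENNReal.ofReal (2 * Real.log n / n) := by
          gcongr
          exact tsum_hre n hn
      _ = ENNReal.ofReal (4 * Real.log n / n) := by
          rw [← ENNReal.ofReal_mul (by norm_num)]
          congr 1
          ring
  have hgsum : (∑' j : Fin (k+1) → ℤ, ENNReal.ofReal (g j))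
      ≤ ENNReal.ofReal (A^(k+2) * (4*Real.log n/n)^(k+1)) := by
    have hgj : ∀ j : Fin (k+1) → ℤ, ENNReal.ofReal (g j)
        = ENNReal.ofReal (A^(k+2)) * ∏ i, ENNReal.ofReal (w (j i)) := by
      intro j
      rw [hg]; dsimp only
      rw [ENNReal.ofReal_mul (by positivity), ENNReal.ofReal_prod_of_nonneg
        (fun i _ => hw_nonneg _)]
    rw [tsum_congr hgj, ENNReal.tsum_mul_left, tsum_pi_prod (fun x => ENNReal.ofReal (w x)) (k+1)]
    calc ENNReal.ofReal (A^(k+2)) * (∑' x : ℤ, ENNReal.ofReal (w x)) ^ (k+1)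
        ≤ ENNReal.ofReal (A^(k+2)) * ENNReal.ofReal (4*Real.log n/n) ^ (k+1) := by
          gcongr
      _ = ENNReal.ofReal (A^(k+2) * (4*Real.log n/n)^(k+1)) := by
          rw [← ENNReal.ofReal_pow hrn, ← ENNReal.ofReal_mul (by positivity)]
  have hfin : (∑' j : Fin (k+1) → ℤ, ENNReal.ofReal (g j)) ≠ ⊤ :=
    ne_top_of_le_ne_top ENNReal.ofReal_ne_top hgsum
  have hgsummable : Summable g := by
    have h := ENNReal.summable_toReal hfin
    refine h.congr fun j => ?_
    rw [ENNReal.toReal_ofReal (hg_nonneg j)]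
  have hfnorm : Summable (fun j => ‖f j‖) :=
    Summable.of_nonneg_of_le (fun j => norm_nonneg _) hle hgsummable
  have habs : ‖hillS V n z s k‖ ≤ ∑' j, ‖f j‖ := by
    rw [hillS_eq]
    have h := norm_tsum_le_tsum_norm (f := f) hfnorm
    exact h
  have hsum_le : (∑' j, ‖f j‖) ≤ A^(k+2) * (4*Real.log n/n)^(k+1) := by
    have h1 : (∑' j, ‖f j‖) ≤ ∑' j, g j := Summable.tsum_le_tsum hle hfnorm hgsummable
    have h2 : (∑' j, g j) ≤ A^(k+2) * (4*Real.log n/n)^(k+1) := by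
      rw [← ENNReal.ofReal_le_ofReal_iff hBnn,
        ENNReal.ofReal_tsum_of_nonneg hg_nonneg hgsummable]
      exact hgsum
    linarith
  have hfinal : A^(k+2) * (4*Real.log n/n)^(k+1)
      ≤ (4 * A) ^ (k + 2) * (Real.log n / n) ^ (k + 1) := by
    have h4 : (4*Real.log n/n)^(k+1) = 4^(k+1) * (Real.log n/n)^(k+1) := by
      rw [← mul_pow]
      congr 1
      ring
    rw [h4, mul_pow]
    have hrr : (0:ℝ) ≤ (Real.log n / n)^(k+1) := by
      apply pow_nonneg
      apply div_nonneg _ hnR.le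
      linarith
    calc A^(k+2) * (4^(k+1) * (Real.log n/n)^(k+1))
        = (4^(k+1) * A^(k+2)) * (Real.log n/n)^(k+1) := by ring
      _ ≤ (4^(k+2) * A^(k+2)) * (Real.log n/n)^(k+1) := by
          apply mul_le_mul_of_nonneg_right _ hrr
          apply mul_le_mul_of_nonneg_right _ (by positivity)
          apply pow_le_pow_right₀ (by norm_num)
          omega
  linarith

theorem stmt7 (A : ℝ) (hA : 0 < A) (V : ℤ → ℂ)
    (hV : ∀ k : ℤ, k % 2 = 0 → 1 / A ≤ ‖V k‖ ∧ ‖V k‖ ≤ A) :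
    (∀ n : ℕ, 3 ≤ n → ∀ z : ℂ, ‖z‖ < (n : ℝ) / 2 → ∀ s : ℤ, s = 1 ∨ s = -1 →
      ∀ k : ℕ, ‖hillS V n z s k‖ ≤ (4 * A) ^ (k + 2) * (Real.log n / n) ^ (k + 1)) ∧
    (∃ C : ℝ, 0 < C ∧ ∃ N : ℕ, ∀ n : ℕ, N ≤ n → ∀ z : ℂ, ‖z‖ < (n : ℝ) / 2 →
      ∀ s : ℤ, s = 1 ∨ s = -1 →
      ∑' k : ℕ, ‖hillS V n z s k‖ ≤ C * Real.log n / n) := by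
  have hV' : ∀ k : ℤ, k % 2 = 0 → ‖V k‖ ≤ A := fun k hk => (hV k hk).2
  have hp1 : ∀ n : ℕ, 3 ≤ n → ∀ z : ℂ, ‖z‖ < (n : ℝ) / 2 → ∀ s : ℤ, s = 1 ∨ s = -1 →
      ∀ k : ℕ, ‖hillS V n z s k‖ ≤ (4 * A) ^ (k + 2) * (Real.log n / n) ^ (k + 1) :=
    fun n hn z hz s hs k => part1 A hA V hV' n hn z hz s hs k
  refine ⟨hp1, ⟨32 * A^2, by positivity, ?_⟩⟩
  refine ⟨max 3 (Nat.ceil ((256:ℝ) * A^2) + 3), fun n hn z hz s hs => ?_⟩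
  have hn3 : 3 ≤ n := le_trans (le_max_left _ _) hn
  have hnA : (256:ℝ) * A^2 ≤ n := by
    have h1 : (Nat.ceil ((256:ℝ) * A^2) : ℕ) ≤ n := by
      have := le_trans (le_max_right 3 (Nat.ceil ((256:ℝ) * A^2) + 3)) hn
      omega
    calc (256:ℝ) * A^2 ≤ (Nat.ceil ((256:ℝ) * A^2) : ℝ) := Nat.le_ceil _
      _ ≤ n := by exact_mod_cast h1
  have hnR : (0:ℝ) < n := by positivity
  have hlog1 : 1 ≤ Real.log n := one_le_log n hn3
  set r : ℝ := Real.log n / n with hr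
  have hr0 : 0 ≤ r := div_nonneg (by linarith) hnR.le
  -- key smallness: 4 * A * r ≤ 1/2
  have hsqrt : (16:ℝ) * A ≤ Real.sqrt n := by
    have h1 : Real.sqrt ((256:ℝ) * A^2) ≤ Real.sqrt n := Real.sqrt_le_sqrt hnA
    have h2 : Real.sqrt ((256:ℝ) * A^2) = 16 * A := by
      rw [show (256:ℝ) * A^2 = (16*A)^2 by ring]
      exact Real.sqrt_sq (by positivity)
    linarith
  have hsqrtpos : (0:ℝ) < Real.sqrt n := lt_of_lt_of_le (by positivity) hsqrt
  have hlogle : Real.log n ≤ 2 * Real.sqrt n := by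
    have h := Real.log_natCast_le_rpow_div n (by norm_num : (0:ℝ) < 1/2)
    rw [Real.sqrt_eq_rpow]
    linarith
  have hx : 4 * A * r ≤ 1/2 := by
    have hnn : (n:ℝ) = Real.sqrt n * Real.sqrt n := (Real.mul_self_sqrt hnR.le).symm
    have h1 : r ≤ 2 / Real.sqrt n := by
      rw [hr, div_le_div_iff₀ hnR (by positivity)]
      calc Real.log n * Real.sqrt n ≤ (2 * Real.sqrt n) * Real.sqrt n := by
            apply mul_le_mul_of_nonneg_right hlogle hsqrtpos.le
        _ = 2 * (Real.sqrt n * Real.sqrt n) := by ring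
        _ = 2 * n := by rw [← hnn]
    calc 4 * A * r ≤ 4 * A * (2 / Real.sqrt n) := by
          apply mul_le_mul_of_nonneg_left h1 (by positivity)
      _ = 8 * A / Real.sqrt n := by ring
      _ ≤ 8 * A / (16 * A) := by
          apply div_le_div_of_nonneg_left (by positivity) (by positivity) hsqrt
      _ = 1/2 := by
          rw [div_eq_div_iff (by positivity) (by norm_num : (2:ℝ) ≠ 0)]
          ring
  set x : ℝ := 4 * A * r with hxdef
  have hx0 : 0 ≤ x := by positivity
  have hx1 : x < 1 := lt_of_le_of_lt hx (by norm_num)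
  have hmaj : ∀ k : ℕ, ‖hillS V n z s k‖ ≤ ((4*A)^2 * r) * x ^ k := by
    intro k
    have h := hp1 n hn3 z hz s hs k
    have : (4 * A) ^ (k + 2) * r ^ (k + 1) = ((4*A)^2 * r) * x ^ k := by
      rw [hxdef, mul_pow]
      ring
    rw [hr] at this
    linarith [h, le_of_eq this]
  have hgeo : Summable (fun k : ℕ => ((4*A)^2 * r) * x ^ k) :=
    (summable_geometric_of_lt_one hx0 hx1).mul_left _
  have hsuma : Summable (fun k : ℕ => ‖hillS V n z s k‖) :=
    Summable.of_nonneg_of_le (fun k => norm_nonneg _) hmaj hgeo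
  calc (∑' k : ℕ, ‖hillS V n z s k‖) ≤ ∑' k : ℕ, ((4*A)^2 * r) * x ^ k :=
        Summable.tsum_le_tsum hmaj hsuma hgeo
    _ = ((4*A)^2 * r) * (1 - x)⁻¹ := by
        rw [tsum_mul_left, tsum_geometric_of_lt_one hx0 hx1]
    _ ≤ ((4*A)^2 * r) * 2 := by
        apply mul_le_mul_of_nonneg_left _ (by positivity)
        have h12 : (1:ℝ)/2 ≤ 1 - x := by linarith
        calc (1-x)⁻¹ ≤ ((1:ℝ)/2)⁻¹ := by
              apply inv_anti₀ (by norm_num) h12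
          _ = 2 := by norm_num
    _ = 32 * A^2 * Real.log n / n := by
        rw [hr]
        ring
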